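/- An imputation x belongs to the core of a cooperative game (i.e., Σ_{k∈C} xₖ ≥ v(C) for all coalitions C) if and only if x is not dominated by any imputation. -/

import Mathlib

/-- The set of imputations of the cooperative game `⟨N, v⟩`. -/
def Imputation {N : Type*} [Fintype N] [DecidableEq N] (v : Finset N → ℝ)
    (x : N → ℝ) : Prop :=
  (∑ k, x k) = v Finset.univ ∧ ∀ k : N, v {k} ≤ x k

/-- Domination via the coalition `C`: `x →_C y`. -/
def DomVia {N : Type*} [Fintype N] [DecidableEq N] (v : Finset N → ℝ)
    (C : Finset N) (x y : N → ℝ) : Prop :=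
  (∀ k ∈ C, y k < x k) ∧ (∑ k ∈ C, x k) ≤ v C

/-- `x` dominates `y`: domination via some nonempty coalition. -/
def Dominates {N : Type*} [Fintype N] [DecidableEq N] (v : Finset N → ℝ)
    (x y : N → ℝ) : Prop :=
  ∃ C : Finset N, C.Nonempty ∧ DomVia v C x y

/-- An imputation is in the core iff it is undominated. -/
theorem core_iff_undominated {N : Type*} [Fintype N] [DecidableEq N]
    (v : Finset N → ℝ) (h0 : v ∅ = 0)
    (hnonneg : ∀ C : Finset N, 0 ≤ v C)
    (hsuper : ∀ C C' : Finset N, Disjoint C C' → v C + v C' ≤ v (C ∪ C'))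
    (x : N → ℝ) (hx : Imputation v x) :
    (∀ C : Finset N, v C ≤ ∑ k ∈ C, x k) ↔
      ¬ ∃ y : N → ℝ, Imputation v y ∧ Dominates v y x := by
  have singletons : ∀ S : Finset N, ∑ k ∈ S, v {k} ≤ v S := by
    intro S
    induction S using Finset.induction with
    | empty => simp [h0]
    | @insert a S ha ih =>
      rw [Finset.sum_insert ha]
      have hd : Disjoint ({a} : Finset N) S := by simpa using ha
      have := hsuper {a} S hd
      rw [← Finset.insert_eq] at this
      linarith
  constructor
  · rintro hcore ⟨y, hy, C, hCne, hdom, hsum⟩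
    have h1 : v C ≤ ∑ k ∈ C, x k := hcore C
    have h2 : ∑ k ∈ C, x k < ∑ k ∈ C, y k :=
      Finset.sum_lt_sum_of_nonempty hCne hdom
    linarith
  · intro hnd C
    by_contra hC
    push_neg at hC
    have hCne : C.Nonempty := by
      rcases Finset.eq_empty_or_nonempty C with h | h
      · subst h; simp [h0] at hC
      · exact h
    have hCcne : Cᶜ.Nonempty := by
      rcases Finset.eq_empty_or_nonempty Cᶜ with h | h
      · have : C = Finset.univ := by
          simpa [Finset.compl_eq_empty_iff] using h
        subst this
        exact absurd hC (by rw [← hx.1]; simp)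
      · exact h
    set ε : ℝ := (v C - ∑ k ∈ C, x k) / C.card with hε
    set δ : ℝ := (v Finset.univ - v C - ∑ k ∈ Cᶜ, v {k}) / Cᶜ.card with hδ
    have hCcard : (0:ℝ) < C.card := by exact_mod_cast Finset.card_pos.mpr hCne
    have hCccard : (0:ℝ) < Cᶜ.card := by exact_mod_cast Finset.card_pos.mpr hCcne
    have hεpos : 0 < ε := div_pos (by linarith) hCcard
    have hδnn : 0 ≤ δ := by
      apply div_nonneg _ (le_of_lt hCccard)
      have hd : Disjoint C Cᶜ := disjoint_compl_right
      have := hsuper C Cᶜ hd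
      rw [Finset.union_compl] at this
      have := singletons Cᶜ
      linarith
    set y : N → ℝ := fun k => if k ∈ C then x k + ε else v {k} + δ with hy
    have hsumC : ∑ k ∈ C, y k = v C := by
      have : ∑ k ∈ C, y k = ∑ k ∈ C, (x k + ε) :=
        Finset.sum_congr rfl (fun k hk => by simp [hy, hk])
      rw [this, Finset.sum_add_distrib, Finset.sum_const, nsmul_eq_mul, hε]
      field_simp
      ring
    have hsumCc : ∑ k ∈ Cᶜ, y k = v Finset.univ - v C := by
      have : ∑ k ∈ Cᶜ, y k = ∑ k ∈ Cᶜ, (v {k} + δ) :=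
        Finset.sum_congr rfl (fun k hk => by
          simp only [hy]
          rw [if_neg (Finset.mem_compl.mp hk)])
      rw [this, Finset.sum_add_distrib, Finset.sum_const, nsmul_eq_mul, hδ]
      field_simp
      ring
    apply hnd
    refine ⟨y, ⟨?_, ?_⟩, C, hCne, ?_, le_of_eq hsumC⟩
    · rw [← Finset.sum_add_sum_compl C y, hsumC, hsumCc]; ring
    · intro k
      by_cases hk : k ∈ C
      · have := hx.2 k
        simp only [hy, if_pos hk]
        linarith
      · simp only [hy, if_neg hk]
        linarith
    · intro k hk
      simp only [hy, if_pos hk]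
      linarith
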